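/- Fix d ≥ 1 and σ > 0, and set δ = min{1, 1/(4σ²)}. Let g_σ(x) = ∏_{j=1}^d g̃_σ(x_j) be a product probability density on ℝ^d, where the one-dimensional density g̃_σ is σ-subgaussian with mean zero, bounded, and monotonically decreases as its argument moves away from zero in either direction. Then there exists a constant c₁ > 0 (depending on σ and g̃_σ but not on d) such that g_σ(t) ≤ c₁^d · exp(δ‖t‖²) · φ_σ(t) for all t ∈ ℝ^d, where φ_σ is the density of the centered isotropic Gaussian N(0, σ² I_d). -/

import Mathlib

open MeasureTheory ProbabilityTheory ENNReal Filter Topology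

noncomputable section

/-- One-sided Chernoff-type tail bound for a bounded monotone subgaussian density. -/
lemma tail_bound_aux (σ : ℝ) (hσ : 0 < σ) (f : ℝ → ℝ)
    (hf_nonneg : ∀ t, 0 ≤ f t)
    (hmono : ∀ ⦃s t : ℝ⦄, 0 ≤ s → s ≤ t → f t ≤ f s)
    (hsub : ∀ α : ℝ, ∫⁻ t, ENNReal.ofReal (Real.exp (α * t) * f t) ≤
      ENNReal.ofReal (Real.exp (σ ^ 2 * α ^ 2 / 2)))
    (ε : ℝ) (hε0 : 0 < ε) (hε1 : ε < 1) :
    ∀ x : ℝ, 0 < x → f x * (ε * x) ≤ Real.exp (-(1 - ε) ^ 2 * x ^ 2 / (2 * σ ^ 2)) := by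
  intro x hx
  have hσ2 : (0:ℝ) < σ ^ 2 := by positivity
  have h1ε : 0 < 1 - ε := by linarith
  set α : ℝ := (1 - ε) * x / σ ^ 2 with hαdef
  have hα0 : 0 ≤ α := by positivity
  have hA : ENNReal.ofReal (f x * (ε * x)) ≤
      ∫⁻ t in Set.Icc ((1-ε)*x) x, ENNReal.ofReal (f t) := by
    have hvol : volume (Set.Icc ((1-ε)*x) x) = ENNReal.ofReal (ε * x) := by
      rw [Real.volume_Icc]; congr 1; ring
    calc ENNReal.ofReal (f x * (ε * x))
        = ENNReal.ofReal (f x) * volume (Set.Icc ((1-ε)*x) x) := by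
          rw [hvol, ENNReal.ofReal_mul (hf_nonneg x)]
      _ = ∫⁻ _ in Set.Icc ((1-ε)*x) x, ENNReal.ofReal (f x) := by
          rw [setLIntegral_const]
      _ ≤ ∫⁻ t in Set.Icc ((1-ε)*x) x, ENNReal.ofReal (f t) := by
          refine setLIntegral_mono' measurableSet_Icc fun t ht => ?_
          exact ENNReal.ofReal_le_ofReal (hmono (le_trans (by positivity) ht.1) ht.2)
  have hB : (∫⁻ t in Set.Icc ((1-ε)*x) x, ENNReal.ofReal (f t)) ≤
      ENNReal.ofReal (Real.exp (-(α * ((1-ε)*x)))) *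
        ENNReal.ofReal (Real.exp (σ^2*α^2/2)) := by
    calc ∫⁻ t in Set.Icc ((1-ε)*x) x, ENNReal.ofReal (f t)
        ≤ ∫⁻ t in Set.Icc ((1-ε)*x) x,
            ENNReal.ofReal (Real.exp (-(α * ((1-ε)*x)))) *
              ENNReal.ofReal (Real.exp (α*t) * f t) := by
          refine setLIntegral_mono' measurableSet_Icc fun t ht => ?_
          rw [← ENNReal.ofReal_mul (by positivity)]
          apply ENNReal.ofReal_le_ofReal
          have h2 : (1:ℝ) ≤ Real.exp (-(α * ((1-ε)*x))) * Real.exp (α*t) := by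
            rw [← Real.exp_add]
            apply Real.one_le_exp
            nlinarith [ht.1, hα0]
          calc f t = 1 * f t := (one_mul _).symm
            _ ≤ (Real.exp (-(α * ((1-ε)*x))) * Real.exp (α*t)) * f t :=
                mul_le_mul_of_nonneg_right h2 (hf_nonneg t)
            _ = Real.exp (-(α * ((1-ε)*x))) * (Real.exp (α*t) * f t) := by ring
      _ = ENNReal.ofReal (Real.exp (-(α * ((1-ε)*x)))) *
            ∫⁻ t in Set.Icc ((1-ε)*x) x, ENNReal.ofReal (Real.exp (α*t) * f t) :=
          lintegral_const_mul' _ _ ENNReal.ofReal_ne_top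
      _ ≤ ENNReal.ofReal (Real.exp (-(α * ((1-ε)*x)))) *
            ∫⁻ t, ENNReal.ofReal (Real.exp (α*t) * f t) := by
          gcongr
          exact Measure.restrict_le_self
      _ ≤ _ := by gcongr; exact hsub α
  have hcomb := le_trans hA hB
  rw [← ENNReal.ofReal_mul (Real.exp_pos _).le, ← Real.exp_add] at hcomb
  have key : -(α * ((1-ε)*x)) + σ^2*α^2/2 = -(1-ε)^2 * x^2/(2*σ^2) := by
    rw [hαdef]; field_simp; ring
  rw [key] at hcomb
  exact (ENNReal.ofReal_le_ofReal_iff (Real.exp_pos _).le).mp hcomb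

/-- One-dimensional pointwise bound. -/
lemma oneD_bound (σ : ℝ) (hσ : 0 < σ)
    (gt : ℝ → ℝ) (hgt_meas : Measurable gt) (hgt_nonneg : ∀ t, 0 ≤ gt t)
    (hgt_bdd : ∃ C : ℝ, ∀ t, gt t ≤ C)
    (hgt_mono_pos : ∀ ⦃s t : ℝ⦄, 0 ≤ s → s ≤ t → gt t ≤ gt s)
    (hgt_mono_neg : ∀ ⦃s t : ℝ⦄, t ≤ s → s ≤ 0 → gt t ≤ gt s)
    (hgt_subg : ∀ α : ℝ, ∫⁻ t, ENNReal.ofReal (Real.exp (α * t) * gt t) ≤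
      ENNReal.ofReal (Real.exp (σ ^ 2 * α ^ 2 / 2))) :
    ∃ c : ℝ, 0 < c ∧ ∀ x : ℝ,
      gt x ≤ c * Real.exp ((min 1 (1/(4*σ^2)) - 1/(2*σ^2)) * x ^ 2) := by
  have hσ2 : (0:ℝ) < σ ^ 2 := by positivity
  set δ : ℝ := min 1 (1/(4*σ^2)) with hδdef
  have hδ0 : 0 < δ := lt_min one_pos (by positivity)
  have hδle : δ ≤ 1/(4*σ^2) := min_le_right _ _
  set ε : ℝ := σ^2 * δ with hεdef
  have hε0 : 0 < ε := by positivity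
  have hε14 : ε ≤ 1/4 := by
    have h1 : σ^2 * δ ≤ σ^2 * (1/(4*σ^2)) := by nlinarith
    have h2 : σ^2 * (1/(4*σ^2)) = 1/4 := by field_simp
    calc ε = σ^2 * δ := rfl
      _ ≤ σ^2 * (1/(4*σ^2)) := h1
      _ = 1/4 := h2
  have hε1 : ε < 1 := by linarith
  -- exponent comparison
  have hexp : ∀ x : ℝ, -(1-ε)^2 * x^2 / (2*σ^2) ≤ (δ - 1/(2*σ^2)) * x^2 := by
    intro x
    have h1 : -(1-ε)^2 / (2*σ^2) ≤ δ - 1/(2*σ^2) := by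
      rw [div_le_iff₀ (by positivity : (0:ℝ) < 2*σ^2)]
      have hεδ : ε = σ^2 * δ := rfl
      have hinv : 1/(2*σ^2)*(2*σ^2) = 1 := by field_simp
      nlinarith [sq_nonneg ε]
    calc -(1-ε)^2 * x^2 / (2*σ^2) = (-(1-ε)^2 / (2*σ^2)) * x^2 := by ring
      _ ≤ (δ - 1/(2*σ^2)) * x^2 := by nlinarith [sq_nonneg x]
  obtain ⟨C, hC⟩ := hgt_bdd
  have hC0 : 0 ≤ C := le_trans (hgt_nonneg 0) (hC 0)
  refine ⟨max (1/ε) (C * Real.exp (1/(2*σ^2))),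
    lt_of_lt_of_le (by positivity) (le_max_left _ _), fun x => ?_⟩
  have hsub_neg : ∀ α : ℝ, ∫⁻ t, ENNReal.ofReal (Real.exp (α * t) * gt (-t)) ≤
      ENNReal.ofReal (Real.exp (σ ^ 2 * α ^ 2 / 2)) := by
    intro α
    have hmp : MeasurePreserving (fun t : ℝ => -t) volume volume :=
      Measure.measurePreserving_neg _
    have hmeas : Measurable fun t : ℝ => ENNReal.ofReal (Real.exp (-α * t) * gt t) := by
      apply ENNReal.measurable_ofReal.comp
      exact ((Real.measurable_exp.comp (measurable_const.mul measurable_id)).mul hgt_meas)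
    have heq := hmp.lintegral_comp hmeas
    have h1 : (∫⁻ t, ENNReal.ofReal (Real.exp (α * t) * gt (-t))) =
        ∫⁻ t, ENNReal.ofReal (Real.exp (-α * t) * gt t) := by
      rw [← heq]
      congr 1; ext t; congr 2; ring_nf
    rw [h1]
    have := hgt_subg (-α)
    simpa using this
  by_cases hx1 : |x| ≤ 1
  · -- bounded region
    have h1 : 1/(2*σ^2) + (δ - 1/(2*σ^2)) * x^2 ≥ 0 := by
      have hx2 : x^2 ≤ 1 := by nlinarith [sq_abs x, abs_nonneg x]
      have hp : (0:ℝ) < 1/(2*σ^2) := by positivity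
      nlinarith [mul_nonneg hp.le (by linarith : (0:ℝ) ≤ 1 - x^2),
        mul_nonneg hδ0.le (sq_nonneg x)]
    have h2 : (1:ℝ) ≤ Real.exp (1/(2*σ^2)) * Real.exp ((δ - 1/(2*σ^2)) * x^2) := by
      rw [← Real.exp_add]
      exact Real.one_le_exp h1
    calc gt x ≤ C := hC x
      _ ≤ C * Real.exp (1/(2*σ^2)) * Real.exp ((δ - 1/(2*σ^2)) * x^2) := by
          nlinarith
      _ ≤ max (1/ε) (C * Real.exp (1/(2*σ^2))) * Real.exp ((δ - 1/(2*σ^2)) * x^2) := by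
          gcongr; exact le_max_right _ _
  · push_neg at hx1
    have htail : gt x * (ε * |x|) ≤ Real.exp (-(1-ε)^2 * x^2 / (2*σ^2)) := by
      rcases le_or_gt 0 x with hx0 | hx0
      · have hx0' : 0 < x := by
          have h := hx1
          rw [abs_of_nonneg hx0] at h
          linarith
        rw [abs_of_nonneg hx0]
        exact tail_bound_aux σ hσ gt hgt_nonneg hgt_mono_pos hgt_subg ε hε0 hε1 x hx0'
      · have hx0' : 0 < -x := by linarith
        have hmono' : ∀ ⦃s t : ℝ⦄, 0 ≤ s → s ≤ t → gt (-t) ≤ gt (-s) := by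
          intro s t hs hst
          exact hgt_mono_neg (by linarith) (by linarith)
        have := tail_bound_aux σ hσ (fun t => gt (-t)) (fun t => hgt_nonneg _)
          hmono' hsub_neg ε hε0 hε1 (-x) hx0'
        simp only [neg_neg] at this
        rw [abs_of_neg hx0]
        calc gt x * (ε * -x) ≤ Real.exp (-(1-ε)^2 * (-x)^2 / (2*σ^2)) := this
          _ = Real.exp (-(1-ε)^2 * x^2 / (2*σ^2)) := by rw [neg_sq]
    have hxabs : (1:ℝ) ≤ |x| := hx1.le
    have hE : Real.exp (-(1-ε)^2 * x^2 / (2*σ^2)) ≤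
        Real.exp ((δ - 1/(2*σ^2)) * x^2) := Real.exp_le_exp.mpr (hexp x)
    have h3 : gt x * ε ≤ gt x * (ε * |x|) := by
      have hεx : ε ≤ ε * |x| := by nlinarith
      exact mul_le_mul_of_nonneg_left hεx (hgt_nonneg x)
    have h4 : gt x * ε ≤ Real.exp ((δ - 1/(2*σ^2)) * x^2) := le_trans h3 (le_trans htail hE)
    calc gt x = (1/ε) * (gt x * ε) := by field_simp
      _ ≤ (1/ε) * Real.exp ((δ - 1/(2*σ^2)) * x^2) := by
          gcongr
      _ ≤ max (1/ε) (C * Real.exp (1/(2*σ^2))) * Real.exp ((δ - 1/(2*σ^2)) * x^2) := by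
          gcongr; exact le_max_left _ _

theorem product_density_gaussian_bound (σ : ℝ) (hσ : 0 < σ)
    (gt : ℝ → ℝ) (hgt_meas : Measurable gt) (hgt_nonneg : ∀ t, 0 ≤ gt t)
    (hgt_dens : ∫⁻ t, ENNReal.ofReal (gt t) = 1)
    (hgt_mean : (∫ t, t ∂(volume.withDensity fun t => ENNReal.ofReal (gt t))) = 0)
    (hgt_bdd : ∃ C : ℝ, ∀ t, gt t ≤ C)
    (hgt_mono_pos : ∀ ⦃s t : ℝ⦄, 0 ≤ s → s ≤ t → gt t ≤ gt s)
    (hgt_mono_neg : ∀ ⦃s t : ℝ⦄, t ≤ s → s ≤ 0 → gt t ≤ gt s)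
    (hgt_subg : ∀ α : ℝ, ∫⁻ t, ENNReal.ofReal (Real.exp (α * t) * gt t) ≤
      ENNReal.ofReal (Real.exp (σ ^ 2 * α ^ 2 / 2))) :
    ∃ c₁ : ℝ, 0 < c₁ ∧ ∀ d : ℕ, 1 ≤ d → ∀ t : EuclideanSpace ℝ (Fin d),
      (∏ j : Fin d, gt (t j)) ≤
        c₁ ^ d * Real.exp (min 1 (1 / (4 * σ ^ 2)) * ‖t‖ ^ 2) *
          ∏ j : Fin d, gaussianPDFReal 0 ⟨σ ^ 2, sq_nonneg σ⟩ (t j) := by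
  have hσ2 : (0:ℝ) < σ ^ 2 := by positivity
  obtain ⟨c, hc0, hc⟩ := oneD_bound σ hσ gt hgt_meas hgt_nonneg hgt_bdd
    hgt_mono_pos hgt_mono_neg hgt_subg
  have hπ : (0:ℝ) < Real.pi := Real.pi_pos
  set S : ℝ := Real.sqrt (2 * Real.pi * σ ^ 2) with hSdef
  have hS0 : 0 < S := Real.sqrt_pos.mpr (by positivity)
  refine ⟨c * S, by positivity, fun d hd t => ?_⟩
  set δ : ℝ := min 1 (1 / (4 * σ ^ 2)) with hδdef
  have key : ∀ x : ℝ, gt x ≤ (c * S) * Real.exp (δ * x^2) *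
      gaussianPDFReal 0 ⟨σ ^ 2, sq_nonneg σ⟩ x := by
    intro x
    have hφ : gaussianPDFReal 0 ⟨σ ^ 2, sq_nonneg σ⟩ x =
        S⁻¹ * Real.exp (-x^2 / (2*σ^2)) := by
      unfold gaussianPDFReal
      simp [hSdef]
      rfl
    rw [hφ]
    have hrw : (c * S) * Real.exp (δ * x^2) * (S⁻¹ * Real.exp (-x^2 / (2*σ^2))) =
        c * Real.exp ((δ - 1/(2*σ^2)) * x^2) := by
      rw [show (δ - 1/(2*σ^2)) * x^2 = δ * x^2 + -x^2/(2*σ^2) by field_simp; ring,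
        Real.exp_add]
      field_simp
    rw [hrw]
    exact hc x
  calc (∏ j : Fin d, gt (t j)) ≤
      ∏ j : Fin d, ((c * S) * Real.exp (δ * (t j)^2) *
        gaussianPDFReal 0 ⟨σ ^ 2, sq_nonneg σ⟩ (t j)) :=
      Finset.prod_le_prod (fun j _ => hgt_nonneg _) (fun j _ => key (t j))
    _ = (c * S) ^ d * Real.exp (δ * ‖t‖ ^ 2) *
        ∏ j : Fin d, gaussianPDFReal 0 ⟨σ ^ 2, sq_nonneg σ⟩ (t j) := by
      rw [Finset.prod_mul_distrib, Finset.prod_mul_distrib, Finset.prod_const,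
        ← Real.exp_sum]
      congr 2
      · simp
      · rw [EuclideanSpace.norm_eq, Real.sq_sqrt (by positivity), Finset.mul_sum]
        congr 1
        exact Finset.sum_congr rfl fun j _ => by rw [Real.norm_eq_abs, sq_abs]
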